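/- Let M be a compact smooth manifold (without boundary), let N ≥ 1, and let e : M → M_N(ℂ) be a smooth map into the N×N complex matrices such that e(x)² = e(x) and e(x) ≠ 0 for every x ∈ M. Then there exist r ∈ ℕ and smooth maps p_1,…,p_r, q_1,…,q_r : M → M_N(ℂ) such that Σ_{j=1}^r p_j(x)·e(x)·q_j(x) = I_N (the identity matrix) for every x ∈ M. -/

import Mathlib

open scoped Manifold

noncomputable section

lemma aux_trace_ne_zero {N : ℕ} (A : Matrix (Fin N) (Fin N) ℂ)
    (hA : A * A = A) (hA0 : A ≠ 0) : A.trace ≠ 0 := by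
  set f : (Fin N → ℂ) →ₗ[ℂ] (Fin N → ℂ) := Matrix.toLin' A with hf
  have hff : f ∘ₗ f = f := by
    rw [hf, ← Matrix.toLin'_mul, hA]
  obtain ⟨p, hp⟩ := (LinearMap.isProj_iff_isIdempotentElem f).2 hff
  have htr : LinearMap.trace ℂ (Fin N → ℂ) f = (Module.finrank ℂ p : ℂ) :=
    hp.trace
  have htr2 : LinearMap.trace ℂ (Fin N → ℂ) f = A.trace := by
    rw [LinearMap.trace_eq_matrix_trace ℂ (Pi.basisFun ℂ (Fin N)) f]
    congr 1
    rw [LinearMap.toMatrix_eq_toMatrix', hf, LinearMap.toMatrix'_toLin']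
  rw [htr2] at htr
  rw [htr]
  have hpne : p ≠ ⊥ := by
    intro hbot
    apply hA0
    have hf0 : f = 0 := by
      apply LinearMap.ext
      intro v
      have := hp.map_mem v
      rw [hbot, Submodule.mem_bot] at this
      simp [this]
    apply Matrix.toLin'.injective
    rw [map_zero, ← hf, hf0]
  have : Module.finrank ℂ p ≠ 0 := by
    simp only [ne_eq, Submodule.finrank_eq_zero] at *
    exact hpne
  exact_mod_cast Nat.cast_ne_zero.mpr this

lemma aux_single {N : ℕ} (A : Matrix (Fin N) (Fin N) ℂ) (i j : Fin N) :
    Matrix.single i j (1 : ℂ) * A * Matrix.single j i 1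
      = Matrix.single i i (A j j) := by
  ext a b
  simp only [Matrix.mul_apply, Matrix.single, Matrix.of_apply, ite_and, mul_ite, ite_mul,
    one_mul, mul_one, zero_mul, mul_zero, Finset.sum_ite_eq, Finset.sum_ite_eq',
    Finset.mem_univ, if_true]
  by_cases h1 : i = a <;> by_cases h2 : i = b <;> simp [h1, h2]

lemma aux_sum_std {N : ℕ} (A : Matrix (Fin N) (Fin N) ℂ) :
    ∑ ij : Fin N × Fin N,
      Matrix.single ij.1 ij.2 (1 : ℂ) * A * Matrix.single ij.2 ij.1 1
      = A.trace • (1 : Matrix (Fin N) (Fin N) ℂ) := by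
  have h1 : ∀ ij : Fin N × Fin N,
      Matrix.single ij.1 ij.2 (1 : ℂ) * A * Matrix.single ij.2 ij.1 1
        = Matrix.single ij.1 ij.1 (A ij.2 ij.2) := fun ij => aux_single A ij.1 ij.2
  rw [Finset.sum_congr rfl fun ij _ => h1 ij]
  ext a b
  simp only [Matrix.sum_apply, Matrix.smul_apply, Matrix.one_apply, Matrix.single,
    Matrix.of_apply, Matrix.trace, Matrix.diag, smul_eq_mul]
  rw [Fintype.sum_prod_type]
  by_cases hab : a = b
  · subst hab
    simp [Finset.sum_ite_eq, eq_comm (a := a)]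
  · have : ∀ i : Fin N, ∀ j : Fin N,
        (if i = a ∧ i = b then A j j else 0) = 0 := by
      intro i j
      rw [if_neg]
      rintro ⟨h1, h2⟩
      exact hab (h1 ▸ h2)
    simp [this, hab]

/-- if `e` is a smooth family of nonzero idempotent `N×N` complex
matrices parametrized by a compact smooth manifold `M` (smoothness meaning that
every matrix entry is smooth), then there are finitely many smooth matrix-valued
maps `p₁,…,p_r, q₁,…,q_r` with `Σⱼ pⱼ(x)·e(x)·qⱼ(x) = 1` for all `x ∈ M`. -/
theorem stmt_14
    {E : Type*} [NormedAddCommGroup E] [NormedSpace ℝ E]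
    {H : Type*} [TopologicalSpace H] (I : ModelWithCorners ℝ E H)
    (M : Type*) [TopologicalSpace M] [ChartedSpace H M]
    [IsManifold I (⊤ : ℕ∞) M] [CompactSpace M]
    (N : ℕ) (hN : 1 ≤ N)
    (e : M → Matrix (Fin N) (Fin N) ℂ)
    (he_smooth : ∀ i j, ContMDiff I 𝓘(ℝ, ℂ) (⊤ : ℕ∞) (fun x => e x i j))
    (he_idem : ∀ x, e x * e x = e x)
    (he_ne : ∀ x, e x ≠ 0) :
    ∃ (r : ℕ) (p q : Fin r → M → Matrix (Fin N) (Fin N) ℂ),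
      (∀ k i j, ContMDiff I 𝓘(ℝ, ℂ) (⊤ : ℕ∞) (fun x => p k x i j)) ∧
      (∀ k i j, ContMDiff I 𝓘(ℝ, ℂ) (⊤ : ℕ∞) (fun x => q k x i j)) ∧
      (∀ x, ∑ k : Fin r, p k x * e x * q k x = 1) := by
  -- trace function
  set t : M → ℂ := fun x => (e x).trace with ht
  have ht_smooth : ContMDiff I 𝓘(ℝ, ℂ) (⊤ : ℕ∞) t := by
    have : t = fun x => ∑ i : Fin N, e x i i := by
      funext x; rfl
    rw [this]
    exact ContMDiff.sum (fun i _ => he_smooth i i)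
  have ht_ne : ∀ x, t x ≠ 0 := fun x => aux_trace_ne_zero (e x) (he_idem x) (he_ne x)
  have htinv : ContMDiff I 𝓘(ℝ, ℂ) (⊤ : ℕ∞) (fun x => (t x)⁻¹) := by
    intro x
    exact ContDiffAt.comp_contMDiffAt (contDiffAt_inv ℝ (ht_ne x)) (ht_smooth x)
  refine ⟨N * N,
    fun k x => (t x)⁻¹ •
      Matrix.single (finProdFinEquiv.symm k).1 (finProdFinEquiv.symm k).2 1,
    fun k x => Matrix.single (finProdFinEquiv.symm k).2 (finProdFinEquiv.symm k).1 1,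
    ?_, ?_, ?_⟩
  · intro k i j
    have heq : (fun x => ((t x)⁻¹ • Matrix.single (finProdFinEquiv.symm k).1
        (finProdFinEquiv.symm k).2 (1 : ℂ)) i j)
        = (fun z : ℂ => z * Matrix.single (finProdFinEquiv.symm k).1
          (finProdFinEquiv.symm k).2 (1 : ℂ) i j) ∘ (fun x => (t x)⁻¹) := by
      funext x; simp [Matrix.smul_apply]
    rw [heq]
    exact ContDiff.comp_contMDiff (contDiff_id.mul contDiff_const) htinv
  · intro k i j
    exact contMDiff_const
  · intro x
    have key := aux_sum_std (e x)
    calc ∑ k : Fin (N * N),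
          ((t x)⁻¹ • Matrix.single (finProdFinEquiv.symm k).1
            (finProdFinEquiv.symm k).2 (1 : ℂ)) * e x *
            Matrix.single (finProdFinEquiv.symm k).2 (finProdFinEquiv.symm k).1 1
        = ∑ ij : Fin N × Fin N,
            ((t x)⁻¹ • Matrix.single ij.1 ij.2 (1 : ℂ)) * e x *
              Matrix.single ij.2 ij.1 1 := by
          exact Fintype.sum_equiv finProdFinEquiv.symm _ _ (fun k => rfl)
      _ = (t x)⁻¹ • ∑ ij : Fin N × Fin N,
            Matrix.single ij.1 ij.2 (1 : ℂ) * e x *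
              Matrix.single ij.2 ij.1 1 := by
          rw [Finset.smul_sum]
          refine Finset.sum_congr rfl fun ij _ => ?_
          rw [smul_mul_assoc, smul_mul_assoc]
      _ = (t x)⁻¹ • ((e x).trace • (1 : Matrix (Fin N) (Fin N) ℂ)) := by rw [key]
      _ = 1 := by
          rw [smul_smul]
          have h : (t x)⁻¹ * (e x).trace = 1 := inv_mul_cancel₀ (ht_ne x)
          rw [h, one_smul]
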